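/- In the continuous-time infection process over a finite directed graph with fixed nonnegative real-valued delays δ, if all finite shortest-path distances min_{s∈S} d_δ(s,v) are distinct across seeds for each infected node v (no ties), then the label assignment rule 'v inherits the label of its earliest infector' yields, for each infected node v, the label y_{α(v)} of the unique seed α(v) = argmin_{s∈S} d_δ(s,v). -/

import Mathlib

open scoped ENNReal Classical

variable {V : Type*}

/-- Minimum total delay over directed walks with exactly `k` edges from `u` to `v`. -/
noncomputable def walkCost (δ : V → V → ℝ≥0∞) : ℕ → V → V → ℝ≥0∞
  | 0, u, v => if u = v then 0 else ⊤
  | k + 1, u, v => ⨅ w, δ u w + walkCost δ k w v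

/-- Shortest-path distance under delays `δ`. -/
noncomputable def distDelay (δ : V → V → ℝ≥0∞) (u v : V) : ℝ≥0∞ :=
  ⨅ k, walkCost δ k u v

lemma distDelay_self (δ : V → V → ℝ≥0∞) (v : V) : distDelay δ v v = 0 :=
  le_antisymm (iInf_le_of_le 0 (by simp [walkCost])) zero_le

lemma walkCost_append (δ : V → V → ℝ≥0∞) :
    ∀ (k : ℕ) (u v w : V), walkCost δ (k + 1) u w ≤ walkCost δ k u v + δ v w := by
  intro k
  induction k with
  | zero =>
    intro u v w
    by_cases h : u = v
    · subst h
      simp only [walkCost]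
      refine iInf_le_of_le w ?_
      simp [walkCost]
    · simp [walkCost, h]
  | succ k ih =>
    intro u v w
    show (⨅ x, δ u x + walkCost δ (k + 1) x w) ≤ (⨅ x, δ u x + walkCost δ k x v) + δ v w
    rw [ENNReal.iInf_add]
    refine iInf_mono fun x => ?_
    rw [add_assoc]
    exact add_le_add_right (ih x v w) _

lemma distDelay_step (δ : V → V → ℝ≥0∞) (u v w : V) :
    distDelay δ u w ≤ distDelay δ u v + δ v w := by
  rw [distDelay, distDelay, ENNReal.iInf_add]
  refine le_iInf fun k => iInf_le_of_le (k + 1) (walkCost_append δ k u v w)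

/-- If for every infected node the distances from the seeds are distinct (no ties),
then the recursive label-inheritance rule "each node inherits the label of its earliest
infector" assigns to each infected node `v` the label `y_{α(v)}` of the unique closest
seed `α(v) = argmin_{s ∈ S} d_δ(s, v)`. -/
theorem earliest_infector_label_eq_closest_seed_label
    [Finite V] {Λ : Type*} (δ : V → V → ℝ≥0∞) (hδpos : ∀ u v, 0 < δ u v)
    (S : Set V) (y : V → Λ) (τ : V → ℝ≥0∞)
    (hτ : ∀ v, τ v = ⨅ s ∈ S, distDelay δ s v)
    (ρ : V → V)
    (hρ : ∀ v, v ∉ S → τ v < ⊤ → τ (ρ v) + δ (ρ v) v = τ v)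
    (lab : V → Λ)
    (hlabS : ∀ s ∈ S, lab s = y s)
    (hlab : ∀ v, v ∉ S → τ v < ⊤ → lab v = lab (ρ v))
    (hnoties : ∀ v, τ v < ⊤ → ∃! s, s ∈ S ∧ distDelay δ s v = τ v) :
    ∀ v, τ v < ⊤ → ∀ s ∈ S, distDelay δ s v = τ v → lab v = y s := by
  intro v0 hv0 s0 hs0 hds0
  have hne : Nonempty V := ⟨v0⟩
  set ε : ℝ≥0∞ := ⨅ p : V × V, δ p.1 p.2 with hεdef
  obtain ⟨p0, hp0⟩ := Finite.exists_min (fun p : V × V => δ p.1 p.2)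
  have hεeq : ε = δ p0.1 p0.2 := le_antisymm (iInf_le _ p0) (le_iInf hp0)
  have hε0 : 0 < ε := hεeq ▸ hδpos p0.1 p0.2
  have hεle : ∀ u v : V, ε ≤ δ u v := fun u v => iInf_le _ (u, v)
  -- key induction
  have key : ∀ n : ℕ, ∀ v, τ v < ⊤ → τ v ≤ n * ε →
      ∀ s ∈ S, distDelay δ s v = τ v → lab v = y s := by
    intro n
    induction n with
    | zero =>
      intro v hvt hv s hs hds
      have hτ0 : τ v = 0 := le_antisymm (by simpa using hv) zero_le
      by_cases hvS : v ∈ S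
      · obtain ⟨t, _, hu⟩ := hnoties v hvt
        have h1 : s = t := hu s ⟨hs, hds⟩
        have h2 : v = t := hu v ⟨hvS, by rw [distDelay_self, hτ0]⟩
        rw [hlabS v hvS, h2, h1]
      · exfalso
        have hstep := hρ v hvS hvt
        have : δ (ρ v) v = 0 := by
          have h := hstep.trans hτ0
          exact le_antisymm (le_trans (le_add_self) h.le) zero_le
        exact (hδpos (ρ v) v).ne' this
    | succ n ih =>
      intro v hvt hv s hs hds
      by_cases hvS : v ∈ S
      · have hτ0 : τ v = 0 := by
          have h1 : τ v ≤ distDelay δ v v := by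
            rw [hτ v]; exact iInf₂_le v hvS
          rw [distDelay_self] at h1
          exact le_antisymm h1 zero_le
        obtain ⟨t, _, hu⟩ := hnoties v hvt
        have h1 : s = t := hu s ⟨hs, hds⟩
        have h2 : v = t := hu v ⟨hvS, by rw [distDelay_self, hτ0]⟩
        rw [hlabS v hvS, h2, h1]
      · have hstep := hρ v hvS hvt
        have hρfin : τ (ρ v) < ⊤ :=
          lt_of_le_of_lt (le_trans le_self_add hstep.le) hvt
        have hadd : τ (ρ v) + ε ≤ τ v :=
          le_trans (add_le_add_right (hεle (ρ v) v) _) hstep.le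
        have hεtop : ε ≠ ⊤ := by
          intro h
          rw [h, add_top] at hadd
          exact hvt.ne (top_le_iff.mp hadd)
        have hρn : τ (ρ v) ≤ n * ε := by
          have hnsucc : ((n : ℕ) + 1 : ℕ) * ε = n * ε + ε := by
            push_cast; ring
          have h2 : τ (ρ v) + ε ≤ n * ε + ε := le_trans hadd (hv.trans hnsucc.le)
          exact (ENNReal.add_le_add_iff_right hεtop).mp h2
        obtain ⟨t, ⟨htS, htd⟩, _⟩ := hnoties (ρ v) hρfin
        have hlabρ : lab (ρ v) = y t := ih (ρ v) hρfin hρn t htS htd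
        have h1 : distDelay δ t v ≤ τ v := by
          calc distDelay δ t v ≤ distDelay δ t (ρ v) + δ (ρ v) v := distDelay_step δ t (ρ v) v
          _ = τ v := by rw [htd, hstep]
        have h2 : τ v ≤ distDelay δ t v := by rw [hτ v]; exact iInf₂_le t htS
        have h3 : distDelay δ t v = τ v := le_antisymm h1 h2
        obtain ⟨u, _, huu⟩ := hnoties v hvt
        have hsu : s = u := huu s ⟨hs, hds⟩
        have htu : t = u := huu t ⟨htS, h3⟩
        rw [hlab v hvS hvt, hlabρ, htu, hsu]
  -- find n with τ v0 ≤ n * ε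
  by_cases hεtop : ε = ⊤
  · exact key 1 v0 hv0 (by rw [hεtop]; simp) s0 hs0 hds0
  · obtain ⟨n, hn⟩ := ENNReal.exists_nat_gt
      (ENNReal.div_lt_top hv0.ne hε0.ne').ne
    have hle : τ v0 ≤ n * ε := by
      have := (ENNReal.div_lt_iff (Or.inl hε0.ne') (Or.inl hεtop)).mp hn
      exact this.le
    exact key n v0 hv0 hle s0 hs0 hds0
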